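/- Consider the RBB process with n bins and m balls, where m ≥ n. There exist constants c > 0 and n_0 such that for all n ≥ n_0, every load vector at some round t_0 ≥ 0 (i.e., starting the process from round t_0 in any configuration), setting t_3 := t_0 + ⌈744 · (m/n)²⌉, the probability that F_{t_0}^{t_3} ≥ m/384 is at least 1 − e^{−c·n}. -/

import Mathlib

open MeasureTheory ProbabilityTheory Finset
open scoped ENNReal

/-- The number of non-empty bins of a load vector. -/
def kappa {n : ℕ} (x : Fin n → ℕ) : ℕ := (Finset.univ.filter fun i => 0 < x i).card

/-- One round of the repeated balls-into-bins (RBB) process: one ball is removed from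
each non-empty bin and these `kappa x` balls are re-allocated according to the first
`kappa x` of the bin choices `z : Fin n → Fin n`. -/
def rbbStep {n : ℕ} (x : Fin n → ℕ) (z : Fin n → Fin n) (i : Fin n) : ℕ :=
  x i - (if 0 < x i then 1 else 0)
    + (Finset.univ.filter fun j : Fin n => (j : ℕ) < kappa x ∧ z j = i).card

/-- The RBB load vector trajectory started from the load vector `x0`. -/
def rbb {n : ℕ} (x0 : Fin n → ℕ) (Z : ℕ → Fin n → Fin n) : ℕ → Fin n → ℕ
  | 0 => x0
  | t + 1 => rbbStep (rbb x0 Z t) (Z t)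


open Finset Real

noncomputable def fexp {V : Type*} [Fintype V] (h : V → ℝ) : ℝ :=
  (∑ v, h v) / (Fintype.card V : ℝ)

lemma exp_le_add_exp_sq (y : ℝ) : Real.exp y ≤ y + Real.exp (y ^ 2) := by
  have h7 : (1 : ℝ) + y ^ 2 ≤ Real.exp (y ^ 2) := by
    have := Real.add_one_le_exp (y ^ 2); linarith
  rcases le_total y 1 with h1 | h1
  · rcases le_total (-1) y with h2 | h2
    · have hb : |y| ≤ 1 := abs_le.2 ⟨h2, h1⟩
      have hB := Real.exp_bound hb (n := 3) (by norm_num)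
      have h3 : ∑ m ∈ range 3, y ^ m / m.factorial = 1 + y + y ^ 2 / 2 := by
        rw [Finset.sum_range_succ, Finset.sum_range_succ, Finset.sum_range_succ]
        norm_num [Nat.factorial]
      rw [h3] at hB
      have h4 : |y| ^ 3 * ((Nat.succ 3 : ℝ) / ((Nat.factorial 3 : ℝ) * 3)) ≤ y ^ 2 * (2 / 9) := by
        have ha : |y| ^ 3 ≤ |y| ^ 2 := pow_le_pow_of_le_one (abs_nonneg y) hb (by norm_num)
        have h5 : |y| ^ 2 = y ^ 2 := sq_abs y
        have ha2 : |y| ^ 3 ≤ y ^ 2 := by rw [← h5]; exact ha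
        have hfac : (Nat.succ 3 : ℝ) / ((Nat.factorial 3 : ℝ) * 3) = 2 / 9 := by
          norm_num [Nat.factorial]
        rw [hfac]
        have h30 : (0:ℝ) ≤ |y| ^ 3 := by positivity
        nlinarith
      have h6 : Real.exp y ≤ 1 + y + y ^ 2 / 2 + y ^ 2 * (2 / 9) := by
        have := (abs_sub_le_iff.1 hB).1
        nlinarith
      nlinarith
    · have : Real.exp y ≤ 1 := by
        rw [show (1:ℝ) = Real.exp 0 from (Real.exp_zero).symm]
        exact Real.exp_le_exp.2 (by linarith)
      nlinarith
  · have h0 : (0:ℝ) ≤ y := le_trans zero_le_one h1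
    have : Real.exp y ≤ Real.exp (y ^ 2) := Real.exp_le_exp.2 (by nlinarith)
    linarith

set_option linter.unusedSectionVars false
section Fexp

variable {V : Type*} [Fintype V] [Nonempty V]

lemma card_pos_real : (0:ℝ) < (Fintype.card V : ℝ) := by
  exact_mod_cast Fintype.card_pos

lemma fexp_mono {f g : V → ℝ} (h : ∀ v, f v ≤ g v) : fexp f ≤ fexp g := by
  unfold fexp
  rw [div_le_div_iff_of_pos_right (card_pos_real (V := V))]
  exact Finset.sum_le_sum fun v _ => h v

lemma fexp_const (a : ℝ) : fexp (fun _ : V => a) = a := by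
  unfold fexp
  rw [Finset.sum_const, Finset.card_univ, nsmul_eq_mul]
  field_simp

lemma fexp_add (f g : V → ℝ) : fexp (fun v => f v + g v) = fexp f + fexp g := by
  unfold fexp; rw [Finset.sum_add_distrib]; ring

lemma fexp_smul (a : ℝ) (f : V → ℝ) : fexp (fun v => a * f v) = a * fexp f := by
  unfold fexp; rw [← Finset.mul_sum]; ring

lemma fexp_sum {ι : Type*} (s : Finset ι) (f : ι → V → ℝ) :
    fexp (fun v => ∑ i ∈ s, f i v) = ∑ i ∈ s, fexp (f i) := by
  unfold fexp; rw [Finset.sum_comm, ← Finset.sum_div]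

lemma fexp_nonneg {f : V → ℝ} (h : ∀ v, 0 ≤ f v) : 0 ≤ fexp f := by
  have := fexp_mono (V := V) (f := fun _ => (0:ℝ)) (g := f) h
  rwa [fexp_const] at this

/-- crude Hoeffding-type scalar bound. -/
lemma fexp_exp_le {Y : V → ℝ} {c t : ℝ} (hY : ∀ v, |Y v| ≤ c) (h0 : fexp Y = 0) :
    fexp (fun v => Real.exp (t * Y v)) ≤ Real.exp (t ^ 2 * c ^ 2) := by
  have step : ∀ v, Real.exp (t * Y v) ≤ t * Y v + Real.exp (t ^ 2 * c ^ 2) := by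
    intro v
    have h1 := exp_le_add_exp_sq (t * Y v)
    have h2 : Real.exp ((t * Y v) ^ 2) ≤ Real.exp (t ^ 2 * c ^ 2) := by
      apply Real.exp_le_exp.2
      have := hY v
      have habs : (Y v) ^ 2 ≤ c ^ 2 := by
        have := abs_le.1 (hY v)
        nlinarith
      nlinarith [sq_nonneg t]
    linarith
  calc fexp (fun v => Real.exp (t * Y v)) ≤ fexp (fun v => t * Y v + Real.exp (t ^ 2 * c ^ 2)) :=
        fexp_mono step
    _ = t * fexp Y + Real.exp (t ^ 2 * c ^ 2) := by
        rw [fexp_add, fexp_smul, fexp_const]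
    _ = Real.exp (t ^ 2 * c ^ 2) := by rw [h0]; ring

end Fexp
section Mcd

variable {A : Type*} [Fintype A] [Nonempty A]

lemma fexp_sub (f g : A → ℝ) : fexp (fun v => f v - g v) = fexp f - fexp g := by
  unfold fexp; rw [Finset.sum_sub_distrib]; ring

lemma fexp_abs_le {f : A → ℝ} {c : ℝ} (h : ∀ v, |f v| ≤ c) : |fexp f| ≤ c := by
  rw [abs_le]
  constructor
  · have := fexp_mono (V := A) (f := fun _ => -c) (g := f) (fun v => (abs_le.1 (h v)).1)
    rwa [fexp_const] at this
  · have := fexp_mono (V := A) (f := f) (g := fun _ => c) (fun v => (abs_le.1 (h v)).2)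
    rwa [fexp_const] at this

lemma fexp_piSucc {k : ℕ} (f : (Fin (k+1) → A) → ℝ) :
    fexp f = fexp (fun a : A => fexp (fun w : Fin k → A => f (Fin.cons a w))) := by
  unfold fexp
  have key : ∑ z : Fin (k+1) → A, f z = ∑ a : A, ∑ w : Fin k → A, f (Fin.cons a w) := by
    rw [← Equiv.sum_comp (Fin.consEquiv fun _ : Fin (k+1) => A) f, Fintype.sum_prod_type]
    rfl
  have hc : (Fintype.card (Fin (k+1) → A) : ℝ)
      = (Fintype.card A : ℝ) * (Fintype.card (Fin k → A) : ℝ) := by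
    rw [Fintype.card_fun, Fintype.card_fun]
    push_cast
    rw [Fintype.card_fin, Fintype.card_fin, pow_succ]
    ring
  rw [key, hc, ← Finset.sum_div, div_div, mul_comm]

theorem mcdiarmid_mgf : ∀ (k : ℕ) (F : (Fin k → A) → ℝ) (c t : ℝ),
    (∀ (z : Fin k → A) (j : Fin k) (b : A), |F (Function.update z j b) - F z| ≤ c) →
    fexp (fun z => Real.exp (t * (fexp F - F z))) ≤ Real.exp (t ^ 2 * c ^ 2 * k) := by
  intro k
  induction k with
  | zero =>
      intro F c t _
      have huniq : ∀ z : Fin 0 → A, F z = fexp F := by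
        intro z
        have : ∀ z' : Fin 0 → A, z' = z := by
          intro z'; funext j; exact absurd j.2 (by omega)
        unfold fexp
        rw [show (Finset.univ : Finset (Fin 0 → A)) = {z} from
          Finset.eq_singleton_iff_unique_mem.2 ⟨Finset.mem_univ z, fun z' _ => this z'⟩]
        simp
      calc fexp (fun z => Real.exp (t * (fexp F - F z)))
          = fexp (fun _ : Fin 0 → A => (1:ℝ)) := by
            congr 1; funext z; rw [huniq z]; simp
        _ = 1 := fexp_const 1
        _ ≤ Real.exp (t ^ 2 * c ^ 2 * (0:ℕ)) := by simp
  | succ k IH =>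
      intro F c t hF
      set G : A → ℝ := fun a => fexp (fun w : Fin k → A => F (Fin.cons a w)) with hGdef
      have hEF : fexp F = fexp G := fexp_piSucc F
      have hGpair : ∀ a a', |G a - G a'| ≤ c := by
        intro a a'
        have : G a - G a'
            = fexp (fun w : Fin k → A => F (Fin.cons a w) - F (Fin.cons a' w)) := by
          rw [fexp_sub]
        rw [this]
        apply fexp_abs_le
        intro w
        have h1 : F (Fin.cons a' w) = F (Function.update (Fin.cons a w) 0 a') := by
          rw [Fin.update_cons_zero]
        rw [h1, abs_sub_comm]
        exact hF _ _ _
      have hGc : ∀ a, |G a - fexp G| ≤ c := by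
        intro a
        have : G a - fexp G = fexp (fun a' => G a - G a') := by
          rw [fexp_sub, fexp_const]
        rw [this]
        exact fexp_abs_le fun a' => hGpair a a'
      have hinner : ∀ a : A,
          fexp (fun w : Fin k → A => Real.exp (t * (G a - F (Fin.cons a w))))
            ≤ Real.exp (t ^ 2 * c ^ 2 * k) := by
        intro a
        have hbd : ∀ (w : Fin k → A) (j : Fin k) (b : A),
            |F (Fin.cons a (Function.update w j b)) - F (Fin.cons a w)| ≤ c := by
          intro w j b
          rw [Fin.cons_update]
          exact hF _ _ _
        exact IH (fun w => F (Fin.cons a w)) c t hbd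
      calc fexp (fun z => Real.exp (t * (fexp F - F z)))
          = fexp (fun a : A => fexp (fun w : Fin k → A =>
              Real.exp (t * (fexp F - F (Fin.cons a w))))) :=
            fexp_piSucc _
        _ = fexp (fun a : A => Real.exp (t * (fexp F - G a)) *
              fexp (fun w : Fin k → A => Real.exp (t * (G a - F (Fin.cons a w))))) := by
            congr 1; funext a
            rw [← fexp_smul]
            congr 1; funext w
            rw [← Real.exp_add]
            congr 1; ring
        _ ≤ fexp (fun a : A => Real.exp (t * (fexp F - G a)) * Real.exp (t ^ 2 * c ^ 2 * k)) := by
            apply fexp_mono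
            intro a
            exact mul_le_mul_of_nonneg_left (hinner a) (Real.exp_nonneg _)
        _ = Real.exp (t ^ 2 * c ^ 2 * k) * fexp (fun a => Real.exp (t * (fexp F - G a))) := by
            rw [← fexp_smul]; congr 1; funext a; ring
        _ ≤ Real.exp (t ^ 2 * c ^ 2 * k) * Real.exp (t ^ 2 * c ^ 2) := by
            apply mul_le_mul_of_nonneg_left _ (Real.exp_nonneg _)
            have h0 : fexp (fun a => fexp G - G a) = 0 := by
              rw [fexp_sub, fexp_const]; ring
            have := fexp_exp_le (V := A) (Y := fun a => fexp G - G a) (c := c) (t := t)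
              (fun a => by rw [abs_sub_comm]; exact hGc a) h0
            rw [hEF]
            exact this
        _ = Real.exp (t ^ 2 * c ^ 2 * (k+1 : ℕ)) := by
            rw [← Real.exp_add]; congr 1; push_cast; ring

end Mcd
/-! ### The capped quadratic potential -/

noncomputable def gfun (L y : ℝ) : ℝ := y ^ 2 - max (y - L) 0 ^ 2

noncomputable def psi {n : ℕ} (L : ℝ) (x : Fin n → ℕ) : ℝ := ∑ i, gfun L ((x i : ℝ))

section Gfun

variable {L a b y : ℝ}

lemma gfun_nonneg (hL : 0 ≤ L) (hy : 0 ≤ y) : 0 ≤ gfun L y := by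
  unfold gfun
  rcases max_cases (y - L) 0 with ⟨h1, h2⟩ | ⟨h1, h2⟩ <;> rw [h1] <;> nlinarith

lemma gfun_mono (hL : 0 ≤ L) (h0 : 0 ≤ a) (hab : a ≤ b) : gfun L a ≤ gfun L b := by
  unfold gfun
  rcases max_cases (a - L) 0 with ⟨h1, h2⟩ | ⟨h1, h2⟩ <;>
    rcases max_cases (b - L) 0 with ⟨h3, h4⟩ | ⟨h3, h4⟩ <;> rw [h1, h3] <;> nlinarith

lemma gfun_le_linear (hL : 0 ≤ L) (hy : 0 ≤ y) : gfun L y ≤ 2 * L * y := by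
  unfold gfun
  rcases max_cases (y - L) 0 with ⟨h1, h2⟩ | ⟨h1, h2⟩ <;> rw [h1] <;> nlinarith

lemma gfun_step_le (hL : 0 ≤ L) (ha : 0 ≤ a) : gfun L (a + 1) - gfun L a ≤ 2 * L := by
  unfold gfun
  rcases max_cases (a - L) 0 with ⟨h1, h2⟩ | ⟨h1, h2⟩ <;>
    rcases max_cases (a + 1 - L) 0 with ⟨h3, h4⟩ | ⟨h3, h4⟩ <;> rw [h1, h3] <;> nlinarith

lemma gfun_step_nonneg (hL : 0 ≤ L) (ha : 0 ≤ a) : 0 ≤ gfun L (a + 1) - gfun L a := by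
  have := gfun_mono hL ha (by linarith : a ≤ a + 1)
  linarith

lemma gfun_slope_mono (hL : 0 ≤ L) (h0 : 0 ≤ a) (hab : a ≤ b) :
    gfun L (a + 1) - gfun L a ≤ gfun L (b + 1) - gfun L b := by
  unfold gfun
  rcases max_cases (a - L) 0 with ⟨h1, h2⟩ | ⟨h1, h2⟩ <;>
    rcases max_cases (a + 1 - L) 0 with ⟨h3, h4⟩ | ⟨h3, h4⟩ <;>
    rcases max_cases (b - L) 0 with ⟨h5, h6⟩ | ⟨h5, h6⟩ <;>
    rcases max_cases (b + 1 - L) 0 with ⟨h7, h8⟩ | ⟨h7, h8⟩ <;>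
    rw [h1, h3, h5, h7] <;> nlinarith

lemma gfun_nat_lb (hL : 0 ≤ L) (hc : 0 ≤ a) (k : ℕ) :
    gfun L a + k * (gfun L (a + 1) - gfun L a) ≤ gfun L (a + k) := by
  induction k with
  | zero => simp
  | succ k IH =>
      have hslope : gfun L (a + 1) - gfun L a ≤ gfun L ((a + k) + 1) - gfun L (a + k) :=
        gfun_slope_mono hL hc (le_add_of_nonneg_right (by positivity))
      push_cast
      have : (a + (k + 1) : ℝ) = (a + k) + 1 := by ring
      rw [this]
      push_cast at IH
      linarith

lemma gfun_eq_sq (h0 : 0 ≤ y) (hyL : y ≤ L) : gfun L y = y ^ 2 := by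
  unfold gfun
  rw [max_eq_right (by linarith)]
  ring

lemma nat_sq_le_three_pow (j : ℕ) : ((j : ℝ)) ^ 2 ≤ 3 ^ j := by
  induction j with
  | zero => norm_num
  | succ j IH =>
      have h1 : (2 * j + 1 : ℝ) ≤ 2 * 3 ^ j := by
        have hj : j < 3 ^ j := Nat.lt_pow_self (by norm_num)
        have hj' : (j:ℝ) + 1 ≤ 3 ^ j := by exact_mod_cast hj
        linarith
      push_cast
      have h3 : (3:ℝ) ^ (j + 1) = 3 * 3 ^ j := by ring
      rw [h3]
      nlinarith

lemma cap_err_le (b : ℕ) (hy : y - L ≤ (b : ℝ) - 5) (h0 : 0 ≤ L) :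
    max (y - L) 0 ^ 2 ≤ (3 : ℝ) ^ b / 243 := by
  rcases le_or_gt (b : ℕ) 4 with hb | hb
  · have : (b:ℝ) - 5 < 0 := by
      have : (b:ℝ) ≤ 4 := by exact_mod_cast hb
      linarith
    rw [max_eq_right (by linarith)]
    norm_num
    positivity
  · have hb5 : 5 ≤ b := by omega
    have h1 : max (y - L) 0 ≤ ((b - 5 : ℕ) : ℝ) := by
      have : ((b - 5 : ℕ) : ℝ) = (b:ℝ) - 5 := by
        push_cast [Nat.cast_sub hb5]; ring
      rw [this]
      apply max_le (by linarith)
      have : (5:ℝ) ≤ (b:ℝ) := by exact_mod_cast hb5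
      linarith
    have h2 : max (y - L) 0 ^ 2 ≤ ((b - 5 : ℕ) : ℝ) ^ 2 := by
      have hm : (0:ℝ) ≤ max (y - L) 0 := le_max_right _ _
      nlinarith
    have h3 : ((b - 5 : ℕ) : ℝ) ^ 2 ≤ 3 ^ (b - 5 : ℕ) := nat_sq_le_three_pow _
    have h4 : (3:ℝ) ^ (b - 5 : ℕ) = 3 ^ b / 243 := by
      have : b = (b - 5) + 5 := by omega
      rw [this, pow_add]
      norm_num
    linarith

end Gfun
section RBBDet

variable {n : ℕ}

lemma kappa_le (x : Fin n → ℕ) : kappa x ≤ n := by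
  classical
  exact (Finset.card_filter_le _ _).trans (by simp)

lemma card_val_lt {k : ℕ} (hk : k ≤ n) :
    (Finset.univ.filter fun j : Fin n => (j : ℕ) < k).card = k := by
  have he : (Finset.univ.filter fun j : Fin n => (j : ℕ) < k)
      = (Finset.univ : Finset (Fin k)).image (Fin.castLE hk) := by
    ext j
    rw [Finset.mem_filter, Finset.mem_image]
    constructor
    · rintro ⟨-, hj⟩
      exact ⟨⟨(j : ℕ), hj⟩, Finset.mem_univ _, by ext; simp⟩
    · rintro ⟨j', -, rfl⟩
      exact ⟨Finset.mem_univ _, by simpa using j'.2⟩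
  rw [he, Finset.card_image_of_injective _ (Fin.castLE_injective hk)]
  simp

lemma sum_card_throw (x : Fin n → ℕ) (z : Fin n → Fin n) :
    ∑ i, (Finset.univ.filter fun j : Fin n => (j : ℕ) < kappa x ∧ z j = i).card = kappa x := by
  have h1 : ∀ i : Fin n, (Finset.univ.filter fun j : Fin n => (j:ℕ) < kappa x ∧ z j = i)
      = (Finset.univ.filter fun j : Fin n => (j:ℕ) < kappa x).filter (fun j => z j = i) := by
    intro i; rw [Finset.filter_filter]
  calc ∑ i, (Finset.univ.filter fun j : Fin n => (j : ℕ) < kappa x ∧ z j = i).card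
      = ∑ i, ((Finset.univ.filter fun j : Fin n => (j:ℕ) < kappa x).filter
          (fun j => z j = i)).card := by simp_rw [h1]
    _ = (Finset.univ.filter fun j : Fin n => (j:ℕ) < kappa x).card :=
        (Finset.card_eq_sum_card_fiberwise (fun j _ => Finset.mem_univ (z j))).symm
    _ = kappa x := card_val_lt (kappa_le x)

lemma kappa_eq_sum_ite (x : Fin n → ℕ) :
    kappa x = ∑ i, (if 0 < x i then 1 else 0) := by
  unfold kappa
  rw [Finset.card_filter]

lemma sum_rbbStep (x : Fin n → ℕ) (z : Fin n → Fin n) :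
    ∑ i, rbbStep x z i = ∑ i, x i := by
  unfold rbbStep
  rw [Finset.sum_add_distrib, sum_card_throw]
  have hle : ∀ i : Fin n, (if 0 < x i then 1 else 0) ≤ x i := by
    intro i; split <;> omega
  have hsub : ∑ i, (x i - if 0 < x i then 1 else 0)
      = ∑ i, x i - ∑ i, (if 0 < x i then 1 else 0) :=
    Finset.sum_tsub_distrib _ (fun i _ => hle i)
  rw [hsub, ← kappa_eq_sum_ite]
  have hk : kappa x ≤ ∑ i, x i := by
    rw [kappa_eq_sum_ite]
    exact Finset.sum_le_sum fun i _ => hle i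
  omega

lemma rbb_sum (x0 : Fin n → ℕ) (Z : ℕ → Fin n → Fin n) (t : ℕ) :
    ∑ i, rbb x0 Z t i = ∑ i, x0 i := by
  induction t with
  | zero => rfl
  | succ t IH =>
      rw [show rbb x0 Z (t+1) = rbbStep (rbb x0 Z t) (Z t) from rfl, sum_rbbStep, IH]

lemma rbb_congr (x0 : Fin n → ℕ) (Z1 Z2 : ℕ → Fin n → Fin n) (t : ℕ)
    (h : ∀ u < t, Z1 u = Z2 u) : rbb x0 Z1 t = rbb x0 Z2 t := by
  induction t with
  | zero => rfl
  | succ t IH =>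
      show rbbStep (rbb x0 Z1 t) (Z1 t) = rbbStep (rbb x0 Z2 t) (Z2 t)
      rw [IH (fun u hu => h u (by omega)), h t (by omega)]

lemma rbb_shift (x0 : Fin n → ℕ) (Z : ℕ → Fin n → Fin n) (t : ℕ) :
    rbb x0 Z (t + 1) = rbb (rbbStep x0 (Z 0)) (fun u => Z (u + 1)) t := by
  induction t with
  | zero => rfl
  | succ t IH =>
      show rbbStep (rbb x0 Z (t+1)) (Z (t+1)) = _
      rw [IH]
      rfl

end RBBDet

section Moments

variable {n : ℕ} (x : Fin n → ℕ) (i : Fin n)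

/-- number of balls thrown into bin `i`. -/
def Bc (x : Fin n → ℕ) (i : Fin n) (z : Fin n → Fin n) : ℕ :=
  (Finset.univ.filter fun j : Fin n => (j : ℕ) < kappa x ∧ z j = i).card

lemma sum_pi_prod (g : Fin n → Fin n → ℝ) :
    ∑ z : Fin n → Fin n, ∏ j, g j (z j) = ∏ j, ∑ b, g j b := by
  rw [← Finset.sum_prod_piFinset Finset.univ g, Fintype.piFinset_univ]

lemma sum_pi_prod_subset (S : Finset (Fin n)) (g : Fin n → Fin n → ℝ) :
    ∑ z : Fin n → Fin n, ∏ j ∈ S, g j (z j)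
      = (∏ j ∈ S, ∑ b, g j b) * (n : ℝ) ^ (n - S.card) := by
  classical
  have h1 : ∀ z : Fin n → Fin n, ∏ j ∈ S, g j (z j)
      = ∏ j, (if j ∈ S then g j (z j) else 1) := by
    intro z
    rw [Finset.prod_ite_mem Finset.univ S (fun j => g j (z j)), Finset.univ_inter]
  simp_rw [h1]
  have h3 := sum_pi_prod (fun j b => if j ∈ S then g j b else 1)
  rw [h3]
  have h2 : ∀ j : Fin n, (∑ b, if j ∈ S then g j b else 1)
      = if j ∈ S then (∑ b, g j b) else (n : ℝ) := by
    intro j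
    by_cases h : j ∈ S <;> simp [h, Finset.card_univ]
  simp_rw [h2]
  rw [Finset.prod_ite, Finset.prod_const]
  congr 1
  · congr 1
    apply Finset.filter_univ_mem
  · congr 1
    have : Finset.filter (fun j => ¬ j ∈ S) Finset.univ = Sᶜ := by
      ext j; simp
    rw [this, Finset.card_compl]
    simp

lemma Bc_eq_sum (z : Fin n → Fin n) :
    (Bc x i z : ℝ) = ∑ j ∈ Finset.univ.filter (fun j : Fin n => (j:ℕ) < kappa x),
      (if z j = i then (1:ℝ) else 0) := by
  unfold Bc
  rw [← Finset.filter_filter, Finset.card_filter]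
  push_cast
  rfl

lemma sum_single_coord (j : Fin n) :
    ∑ z : Fin n → Fin n, (if z j = i then (1:ℝ) else 0) = (n:ℝ) ^ (n - 1) := by
  have h := sum_pi_prod_subset {j} (fun _ b => if b = i then (1:ℝ) else 0)
  simp only [Finset.prod_singleton, Finset.card_singleton] at h
  rw [h]
  rw [Finset.sum_ite_eq' Finset.univ i (fun _ => (1:ℝ))]
  simp

lemma sum_pair_coord {j j' : Fin n} (hjj : j ≠ j') :
    ∑ z : Fin n → Fin n, ((if z j = i then (1:ℝ) else 0) * (if z j' = i then (1:ℝ) else 0))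
      = (n:ℝ) ^ (n - 2) := by
  have h := sum_pi_prod_subset {j, j'} (fun _ b => if b = i then (1:ℝ) else 0)
  simp only [Finset.prod_pair hjj] at h
  have hc : ({j, j'} : Finset (Fin n)).card = 2 := Finset.card_pair hjj
  rw [hc] at h
  rw [h]
  rw [Finset.sum_ite_eq' Finset.univ i (fun _ => (1:ℝ))]
  simp

lemma fexp_Ba : fexp (fun z : Fin n → Fin n => (Bc x i z : ℝ))
    = (kappa x : ℝ) * (n:ℝ) ^ (n-1) / (n:ℝ) ^ n := by
  unfold fexp
  congr 1
  · simp_rw [Bc_eq_sum x i]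
    rw [Finset.sum_comm]
    have : ∀ j ∈ Finset.univ.filter (fun j : Fin n => (j:ℕ) < kappa x),
        ∑ z : Fin n → Fin n, (if z j = i then (1:ℝ) else 0) = (n:ℝ)^(n-1) := by
      intro j _
      exact sum_single_coord i j
    rw [Finset.sum_congr rfl this, Finset.sum_const, card_val_lt (kappa_le x), nsmul_eq_mul]
  · rw [Fintype.card_fun]
    simp

lemma fexp_Bsq : fexp (fun z : Fin n → Fin n => ((Bc x i z : ℝ))^2)
    = ((kappa x : ℝ) * (n:ℝ) ^ (n-1)
        + ((kappa x:ℝ)^2 - kappa x) * (n:ℝ) ^ (n-2)) / (n:ℝ) ^ n := by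
  classical
  unfold fexp
  congr 1
  · set S := Finset.univ.filter (fun j : Fin n => (j:ℕ) < kappa x) with hS
    have hcard : S.card = kappa x := card_val_lt (kappa_le x)
    have hsq : ∀ z : Fin n → Fin n, ((Bc x i z : ℝ))^2
        = ∑ j ∈ S, ∑ j' ∈ S, ((if z j = i then (1:ℝ) else 0) * (if z j' = i then (1:ℝ) else 0)) := by
      intro z
      rw [sq, Bc_eq_sum x i, ← hS, Finset.sum_mul_sum]
    simp_rw [hsq]
    rw [Finset.sum_comm]
    have hinner : ∀ j ∈ S, (∑ z : Fin n → Fin n, ∑ j' ∈ S,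
        ((if z j = i then (1:ℝ) else 0) * (if z j' = i then (1:ℝ) else 0)))
        = (n:ℝ)^(n-1) + (S.card - 1 : ℝ) * (n:ℝ)^(n-2) := by
      intro j hj
      rw [Finset.sum_comm]
      have hj' : ∀ j' ∈ S, (∑ z : Fin n → Fin n,
          ((if z j = i then (1:ℝ) else 0) * (if z j' = i then (1:ℝ) else 0)))
          = if j' = j then (n:ℝ)^(n-1) else (n:ℝ)^(n-2) := by
        intro j' _
        by_cases h : j' = j
        · subst h
          rw [if_pos rfl]
          have : ∀ z : Fin n → Fin n, ((if z j' = i then (1:ℝ) else 0) * (if z j' = i then (1:ℝ) else 0))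
              = (if z j' = i then (1:ℝ) else 0) := by
            intro z; by_cases hz : z j' = i <;> simp [hz]
          simp_rw [this]
          exact sum_single_coord i j'
        · rw [if_neg h]
          exact sum_pair_coord i (fun he => h he.symm)
      rw [Finset.sum_congr rfl hj']
      have hsplit : ∀ j' ∈ S, (if j' = j then (n:ℝ)^(n-1) else (n:ℝ)^(n-2))
          = (n:ℝ)^(n-2) + (if j' = j then (n:ℝ)^(n-1) - (n:ℝ)^(n-2) else 0) := by
        intro j' _; split <;> ring
      rw [Finset.sum_congr rfl hsplit, Finset.sum_add_distrib, Finset.sum_const,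
        Finset.sum_ite_eq' S j (fun _ => (n:ℝ)^(n-1) - (n:ℝ)^(n-2)), if_pos hj,
        nsmul_eq_mul]
      ring
    rw [Finset.sum_congr rfl hinner, Finset.sum_const, hcard, nsmul_eq_mul]
    push_cast
    ring
  · rw [Fintype.card_fun]
    simp

end Moments
section Moments2

variable {n : ℕ} (x : Fin n → ℕ) (i : Fin n)

lemma three_pow_Bc (z : Fin n → Fin n) :
    (3:ℝ) ^ (Bc x i z) = ∏ j ∈ Finset.univ.filter (fun j : Fin n => (j:ℕ) < kappa x),
      (if z j = i then (3:ℝ) else 1) := by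
  classical
  rw [Finset.prod_ite (fun _ => (3:ℝ)) (fun _ => (1:ℝ))]
  rw [Finset.prod_const, Finset.prod_const, one_pow, mul_one]
  unfold Bc
  rw [← Finset.filter_filter]

lemma fexp_3B (hn : 0 < n) : fexp (fun z : Fin n → Fin n => (3:ℝ) ^ (Bc x i z))
    ≤ Real.exp 2 := by
  classical
  have hκ := kappa_le x
  have key : ∑ z : Fin n → Fin n, (3:ℝ) ^ (Bc x i z)
      = ((n:ℝ) + 2) ^ (kappa x) * (n:ℝ) ^ (n - kappa x) := by
    simp_rw [three_pow_Bc x i]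
    have h := sum_pi_prod_subset (Finset.univ.filter (fun j : Fin n => (j:ℕ) < kappa x))
      (fun _ b => if b = i then (3:ℝ) else 1)
    rw [h, card_val_lt (kappa_le x)]
    congr 1
    have hb : (∑ b : Fin n, if b = i then (3:ℝ) else 1) = (n:ℝ) + 2 := by
      have : ∀ b : Fin n, (if b = i then (3:ℝ) else 1) = 1 + (if b = i then (2:ℝ) else 0) := by
        intro b; split <;> ring
      rw [Finset.sum_congr rfl (fun b _ => this b), Finset.sum_add_distrib,
        Finset.sum_const, Finset.sum_ite_eq' Finset.univ i (fun _ => (2:ℝ)),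
        if_pos (Finset.mem_univ i), Finset.card_univ, Fintype.card_fin, nsmul_eq_mul]
      ring
    rw [Finset.prod_congr rfl (fun j _ => hb), Finset.prod_const, card_val_lt (kappa_le x)]
  unfold fexp
  rw [key, Fintype.card_fun]
  simp only [Fintype.card_fin]
  push_cast
  have hnpos : (0:ℝ) < n := by exact_mod_cast hn
  have hsplit : (n:ℝ) ^ n = (n:ℝ) ^ (kappa x) * (n:ℝ) ^ (n - kappa x) := by
    rw [← pow_add]
    congr 1
    omega
  have hratio : ((n:ℝ) + 2) ^ kappa x * (n:ℝ) ^ (n - kappa x) / (n:ℝ) ^ n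
      = (((n:ℝ) + 2) / n) ^ kappa x := by
    rw [hsplit, div_pow]
    field_simp
  rw [hratio]
  have hbase : ((n:ℝ) + 2) / n ≤ Real.exp (2 / n) := by
    have h1 : (2:ℝ)/n + 1 ≤ Real.exp (2/n) := Real.add_one_le_exp _
    rw [add_div]
    have : (n:ℝ)/n = 1 := by field_simp
    rw [this]
    linarith
  have hbase0 : (0:ℝ) ≤ ((n:ℝ) + 2) / n := by positivity
  have h1 : (((n:ℝ) + 2) / n) ^ kappa x ≤ (((n:ℝ) + 2) / n) ^ n := by
    apply pow_le_pow_right₀ _ hκ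
    rw [le_div_iff₀ hnpos]
    linarith
  have h2 : (((n:ℝ) + 2) / n) ^ n ≤ (Real.exp (2/n)) ^ n :=
    pow_le_pow_left₀ hbase0 hbase n
  have h3 : (Real.exp (2/n)) ^ n = Real.exp 2 := by
    rw [← Real.exp_nat_mul]
    congr 1
    field_simp
  linarith

end Moments2
lemma fexp_div_const {V : Type*} [Fintype V] (f : V → ℝ) (a : ℝ) :
    fexp (fun v => f v / a) = fexp f / a := by
  unfold fexp
  rw [← Finset.sum_div]
  ring

section Drift

variable {n m : ℕ}

lemma rbbStep_cast (x : Fin n → ℕ) (z : Fin n → Fin n) (i : Fin n) :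
    ((rbbStep x z i : ℕ) : ℝ)
      = ((x i : ℝ) - (if 0 < x i then 1 else 0)) + (Bc x i z : ℝ) := by
  show ((x i - (if 0 < x i then 1 else 0)
      + (Finset.univ.filter fun j : Fin n => (j : ℕ) < kappa x ∧ z j = i).card : ℕ) : ℝ) = _
  by_cases h : 0 < x i
  · simp only [if_pos h]
    rw [Nat.cast_add, Nat.cast_sub (by omega : 1 ≤ x i)]
    unfold Bc
    push_cast
    ring
  · simp only [if_neg h, Nat.sub_zero]
    unfold Bc
    push_cast
    ring

set_option maxHeartbeats 1600000 in
/-- The main one-step drift inequality. -/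
lemma drift_lemma (hn : 1000 ≤ n) (hm : n ≤ m) (x : Fin n → ℕ)
    (hx : ∑ i, x i = m) :
    psi (8 * ((m:ℝ)/n)) x + (3/8 : ℝ) * n - 28 * ((m:ℝ)/n) * ((n:ℝ) - kappa x)
      ≤ fexp (fun z : Fin n → Fin n => psi (8 * ((m:ℝ)/n)) (rbbStep x z)) := by
  classical
  have hnn : 0 < n := by omega
  haveI : Nonempty (Fin n → Fin n) := ⟨fun _ => ⟨0, hnn⟩⟩
  have hn0 : (0:ℝ) < n := by exact_mod_cast hnn
  set q : ℝ := (m:ℝ)/n with hqdef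
  set L : ℝ := 8 * q with hLdef
  have hq1 : 1 ≤ q := by
    rw [hqdef, le_div_iff₀ hn0, one_mul]
    exact_mod_cast hm
  have hq0 : 0 < q := by linarith
  have hL0 : (0:ℝ) ≤ L := by rw [hLdef]; linarith
  have hqm : (m:ℝ) = q * n := by rw [hqdef]; field_simp
  set κr : ℝ := (kappa x : ℝ) with hκdef
  have hκn : κr ≤ (n:ℝ) := by rw [hκdef]; exact_mod_cast kappa_le x
  have hκ0 : 0 ≤ κr := by positivity
  set fr : ℝ := (n:ℝ) - κr with hfrdef
  have hfr0 : 0 ≤ fr := by rw [hfrdef]; linarith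
  have hfrn : fr ≤ n := by rw [hfrdef]; linarith
  -- moment helpers
  have hpow1 : (n:ℝ)^(n-1) * n = (n:ℝ)^n := by
    rw [← pow_succ]; congr 1; omega
  have hpow2 : (n:ℝ)^(n-2) * n^2 = (n:ℝ)^n := by
    rw [← pow_add]; congr 1; omega
  have hnpow : (0:ℝ) < (n:ℝ)^n := by positivity
  have hBa : ∀ i, fexp (fun z : Fin n → Fin n => (Bc x i z : ℝ)) = κr / n := by
    intro i
    rw [fexp_Ba x i, ← hκdef, div_eq_div_iff (ne_of_gt hnpow) (ne_of_gt hn0)]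
    rw [mul_assoc, hpow1]
  have hBb : ∀ i, fexp (fun z : Fin n → Fin n => ((Bc x i z : ℝ))^2)
      = κr / n + (κr^2 - κr) / n^2 := by
    intro i
    rw [fexp_Bsq x i, ← hκdef]
    rw [div_add_div _ _ (ne_of_gt hn0) (by positivity), div_eq_div_iff (by positivity) (by positivity)]
    calc (κr * (n:ℝ)^(n-1) + (κr^2 - κr) * (n:ℝ)^(n-2)) * ((n:ℝ) * (n:ℝ)^2)
        = κr * ((n:ℝ)^(n-1) * n) * (n:ℝ)^2 + (κr^2 - κr) * ((n:ℝ)^(n-2) * (n:ℝ)^2) * n := by ring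
      _ = κr * (n:ℝ)^n * (n:ℝ)^2 + (κr^2 - κr) * (n:ℝ)^n * n := by rw [hpow1, hpow2]
      _ = (κr * (n:ℝ)^2 + (n:ℝ) * (κr^2 - κr)) * (n:ℝ)^n := by ring
  -- the per-bin expectations
  set P : Fin n → ℝ :=
    fun i => fexp (fun z : Fin n → Fin n => gfun L ((rbbStep x z i : ℕ) : ℝ)) with hPdef
  have hsplit : fexp (fun z : Fin n → Fin n => psi L (rbbStep x z)) = ∑ i, P i := by
    unfold psi
    rw [fexp_sum]
  -- bound for nonempty bins (convexity)
  have hbin_pos : ∀ i, 0 < x i → gfun L ((x i : ℝ)) - 2*L*fr/n ≤ P i := by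
    intro i hi
    have hc0 : (0:ℝ) ≤ (x i : ℝ) - 1 := by
      have : (1:ℝ) ≤ (x i : ℝ) := by exact_mod_cast hi
      linarith
    set c : ℝ := (x i : ℝ) - 1 with hcdef
    set s0 : ℝ := gfun L (c+1) - gfun L c with hs0def
    have hs0n : 0 ≤ s0 := gfun_step_nonneg hL0 hc0
    have hs0L : s0 ≤ 2*L := gfun_step_le hL0 hc0
    have hpt : ∀ z : Fin n → Fin n,
        gfun L c + s0 * ((Bc x i z:ℝ)) ≤ gfun L ((rbbStep x z i : ℕ):ℝ) := by
      intro z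
      rw [rbbStep_cast x z i, if_pos hi]
      have h := gfun_nat_lb hL0 hc0 (Bc x i z)
      have harg : ((x i:ℝ) - 1) + (Bc x i z : ℝ) = c + (Bc x i z : ℝ) := by rw [hcdef]
      rw [harg]
      rw [← hs0def] at h
      nlinarith [h]
    have h1 : fexp (fun z : Fin n → Fin n => gfun L c + s0 * ((Bc x i z:ℝ))) ≤ P i :=
      fexp_mono hpt
    have h2 : fexp (fun z : Fin n → Fin n => gfun L c + s0 * ((Bc x i z:ℝ)))
        = gfun L c + s0 * (κr / n) := by
      rw [fexp_add, fexp_const, fexp_smul, hBa i]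
    rw [h2] at h1
    have hgoal : gfun L ((x i : ℝ)) - 2*L*fr/n ≤ gfun L c + s0 * (κr / n) := by
      have hxi : (x i : ℝ) = c + 1 := by rw [hcdef]; ring
      rw [hxi, show gfun L (c+1) = gfun L c + s0 from by rw [hs0def]; ring]
      have hκfr : κr / n = 1 - fr / n := by
        rw [hfrdef]; field_simp; ring
      rw [hκfr]
      have hfrn0 : 0 ≤ fr / n := by positivity
      have : s0 * (fr/n) ≤ 2*L*(fr/n) := mul_le_mul_of_nonneg_right hs0L hfrn0
      have hdiv : 2*L*fr/n = 2*L*(fr/n) := by ring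
      nlinarith
    linarith
  -- bound for nonempty low bins
  have hbin_low : ∀ i, 0 < x i → (x i : ℝ) ≤ 4*q →
      gfun L ((x i : ℝ)) + 0.95 - 9*q*fr/n ≤ P i := by
    intro i hi hlow
    have hc0 : (0:ℝ) ≤ (x i : ℝ) - 1 := by
      have : (1:ℝ) ≤ (x i : ℝ) := by exact_mod_cast hi
      linarith
    set c : ℝ := (x i : ℝ) - 1 with hcdef
    have hc4 : c ≤ 4*q - 1 := by rw [hcdef]; linarith
    have hpt : ∀ z : Fin n → Fin n,
        c^2 + 2*c*((Bc x i z:ℝ)) + ((Bc x i z:ℝ))^2 - (3:ℝ)^(Bc x i z)/243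
          ≤ gfun L ((rbbStep x z i : ℕ):ℝ) := by
      intro z
      rw [rbbStep_cast x z i, if_pos hi]
      have harg : ((x i:ℝ) - 1) + (Bc x i z : ℝ) = c + (Bc x i z : ℝ) := by rw [hcdef]
      rw [harg]
      have hcap : max ((c + (Bc x i z:ℝ)) - L) 0 ^ 2 ≤ (3:ℝ)^(Bc x i z)/243 := by
        apply cap_err_le _ _ hL0
        have hB0 : (0:ℝ) ≤ (Bc x i z : ℝ) := by positivity
        rw [hLdef]
        linarith
      have hgd : gfun L (c + (Bc x i z:ℝ))
          = (c + (Bc x i z:ℝ))^2 - max ((c + (Bc x i z:ℝ)) - L) 0 ^ 2 := rfl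
      nlinarith [hcap]
    have h1 : fexp (fun z : Fin n → Fin n =>
        c^2 + 2*c*((Bc x i z:ℝ)) + ((Bc x i z:ℝ))^2 - (3:ℝ)^(Bc x i z)/243) ≤ P i :=
      fexp_mono hpt
    have h2 : fexp (fun z : Fin n → Fin n =>
        c^2 + 2*c*((Bc x i z:ℝ)) + ((Bc x i z:ℝ))^2 - (3:ℝ)^(Bc x i z)/243)
        = c^2 + 2*c*(κr/n) + (κr/n + (κr^2 - κr)/n^2)
          - fexp (fun z : Fin n → Fin n => (3:ℝ)^(Bc x i z))/243 := by
      have e1 : (fun z : Fin n → Fin n =>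
          c^2 + 2*c*((Bc x i z:ℝ)) + ((Bc x i z:ℝ))^2 - (3:ℝ)^(Bc x i z)/243)
          = fun z => (c^2 + 2*c*((Bc x i z:ℝ)))
              + (((Bc x i z:ℝ))^2 - (3:ℝ)^(Bc x i z)/243) := by
        funext z; ring
      rw [e1, fexp_add, fexp_add, fexp_const, fexp_smul, fexp_sub, fexp_div_const, hBa i, hBb i]
      ring
    rw [h2] at h1
    have hE3 : fexp (fun z : Fin n → Fin n => (3:ℝ)^(Bc x i z)) ≤ 7.39 := by
      have h1 := fexp_3B x i hnn
      have h2 : Real.exp 2 ≤ 7.39 := by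
        have he : Real.exp 1 ≤ 2.7182818286 := le_of_lt Real.exp_one_lt_d9
        have he0 : 0 < Real.exp 1 := Real.exp_pos 1
        have : Real.exp 2 = Real.exp 1 * Real.exp 1 := by
          rw [← Real.exp_add]; norm_num
        rw [this]
        nlinarith
      linarith
    -- final arithmetic
    have hgL : gfun L ((x i:ℝ)) = ((x i:ℝ))^2 := by
      apply gfun_eq_sq (by positivity)
      rw [hLdef]; linarith
    rw [hgL]
    set u : ℝ := fr / n with hudef
    have hu0 : 0 ≤ u := by positivity
    have hu1 : u ≤ 1 := by rw [hudef]; rw [div_le_one hn0]; exact hfrn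
    have hρu : κr / n = 1 - u := by rw [hudef, hfrdef]; field_simp; ring
    have hρsq : (κr^2 - κr) / n^2 = (1-u)^2 - (1-u)/n := by
      have : (κr^2 - κr)/n^2 = (κr/n)^2 - (κr/n)/n := by field_simp
      rw [this, hρu]
    have hwn : (1-u)/n ≤ 0.001 := by
      have h1 : (1-u)/n ≤ 1/1000 := by
        apply div_le_div₀ (by norm_num) (by linarith) (by norm_num)
        exact_mod_cast hn
      linarith
    have hwn0 : 0 ≤ (1-u)/n := by
      apply div_nonneg (by linarith) (le_of_lt hn0)
    rw [hρu, hρsq] at h1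
    have hxi : (x i:ℝ) = c + 1 := by rw [hcdef]; ring
    rw [hxi]
    have hkey : 0 ≤ u * (9*q - 2*c - 3 + u) := by
      apply mul_nonneg hu0
      nlinarith
    have h9q : 9*q*fr/n = 9*q*u := by rw [hudef]; ring
    rw [h9q]
    nlinarith [h1, hkey, hwn, hwn0]
  -- empty bins
  have hbin_emp : ∀ i, ¬ 0 < x i → gfun L ((x i : ℝ)) ≤ P i := by
    intro i hi
    have hx0 : x i = 0 := by omega
    have hg0 : gfun L ((x i : ℝ)) = 0 := by
      rw [hx0]
      unfold gfun
      rw [max_eq_right (by simpa using hL0)]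
      norm_num
    rw [hg0, hPdef]
    apply fexp_nonneg
    intro z
    exact gfun_nonneg hL0 (by positivity)
  -- combine the three bounds
  set Lo : Finset (Fin n) := Finset.univ.filter (fun i => 0 < x i ∧ (x i : ℝ) ≤ 4*q) with hLodef
  have hbin_all : ∀ i, gfun L ((x i:ℝ))
      + (if i ∈ Lo then 0.95 - 9*q*fr/n else -(2*L*fr/n)) ≤ P i := by
    intro i
    by_cases hmem : i ∈ Lo
    · rw [if_pos hmem]
      rw [hLodef] at hmem
      simp only [Finset.mem_filter, Finset.mem_univ, true_and] at hmem
      have := hbin_low i hmem.1 hmem.2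
      linarith
    · rw [if_neg hmem]
      by_cases hpos : 0 < x i
      · have := hbin_pos i hpos
        linarith
      · have := hbin_emp i hpos
        have h2 : 0 ≤ 2*L*fr/n := by positivity
        linarith
  -- sum everything
  have hsum_all : psi L x + ∑ i, (if i ∈ Lo then 0.95 - 9*q*fr/n else -(2*L*fr/n))
      ≤ ∑ i, P i := by
    unfold psi
    rw [← Finset.sum_add_distrib]
    exact Finset.sum_le_sum fun i _ => hbin_all i
  have hsum_ite : ∑ i, (if i ∈ Lo then 0.95 - 9*q*fr/n else -(2*L*fr/n))
      = (n:ℝ) * (-(2*L*fr/n)) + (Lo.card : ℝ) * ((0.95 - 9*q*fr/n) - (-(2*L*fr/n))) := by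
    have h1 : ∀ i : Fin n, (if i ∈ Lo then 0.95 - 9*q*fr/n else -(2*L*fr/n))
        = -(2*L*fr/n) + (if i ∈ Lo then (0.95 - 9*q*fr/n) - (-(2*L*fr/n)) else 0) := by
      intro i; split <;> ring
    rw [Finset.sum_congr rfl (fun i _ => h1 i), Finset.sum_add_distrib, Finset.sum_const,
      Finset.card_univ, Fintype.card_fin, nsmul_eq_mul]
    congr 1
    rw [← Finset.sum_filter]
    have : Finset.univ.filter (fun i => i ∈ Lo) = Lo := Finset.filter_univ_mem Lo
    rw [this, Finset.sum_const, nsmul_eq_mul]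
  -- the cardinality bound : Lo.card ≥ 3n/4 - fr
  have hLocard : (3/4:ℝ) * n - fr ≤ (Lo.card : ℝ) := by
    set Lq : Finset (Fin n) := Finset.univ.filter (fun i => (x i : ℝ) ≤ 4*q) with hLqdef
    set Zs : Finset (Fin n) := Finset.univ.filter (fun i => ¬ 0 < x i) with hZdef
    have hZcard : (Zs.card : ℝ) = fr := by
      have h1 : (Finset.univ.filter (fun i : Fin n => 0 < x i)).card + Zs.card
          = Fintype.card (Fin n) := by
        rw [hZdef, ← Finset.card_univ]
        exact Finset.card_filter_add_card_filter_not _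
      have h2 : kappa x + Zs.card = n := by
        unfold kappa at *
        simpa using h1
      rw [hfrdef, hκdef]
      have : (Zs.card : ℕ) = n - kappa x := by omega
      rw [this]
      push_cast [Nat.cast_sub (kappa_le x)]
      ring
    have hsub : Lq \ Zs ⊆ Lo := by
      intro i hi
      rw [Finset.mem_sdiff] at hi
      rw [hLodef, Finset.mem_filter]
      refine ⟨Finset.mem_univ _, ?_, ?_⟩
      · have := hi.2
        rw [hZdef, Finset.mem_filter] at this
        push_neg at this
        exact this (Finset.mem_univ _)
      · have := hi.1
        rw [hLqdef, Finset.mem_filter] at this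
        exact this.2
    have hLq34 : (3/4:ℝ) * n ≤ (Lq.card : ℝ) := by
      set Hi : Finset (Fin n) := Finset.univ.filter (fun i => ¬ ((x i : ℝ) ≤ 4*q)) with hHidef
      have hcards : Lq.card + Hi.card = n := by
        rw [hLqdef, hHidef]
        have := Finset.card_filter_add_card_filter_not
          (s := (Finset.univ : Finset (Fin n))) (fun i => (x i : ℝ) ≤ 4*q)
        simpa using this
      have hHi4 : (Hi.card : ℝ) * (4*q) ≤ (m:ℝ) := by
        have h1 : ∀ i ∈ Hi, (4*q : ℝ) ≤ (x i : ℝ) := by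
          intro i hi
          rw [hHidef, Finset.mem_filter] at hi
          linarith [not_le.mp hi.2]
        have h2 : (Hi.card : ℝ) * (4*q) ≤ ∑ i ∈ Hi, (x i : ℝ) := by
          calc (Hi.card : ℝ) * (4*q) = ∑ _i ∈ Hi, (4*q:ℝ) := by
                rw [Finset.sum_const, nsmul_eq_mul]
            _ ≤ ∑ i ∈ Hi, (x i : ℝ) := Finset.sum_le_sum h1
        have h3 : ∑ i ∈ Hi, (x i : ℝ) ≤ ∑ i, (x i : ℝ) := by
          apply Finset.sum_le_sum_of_subset_of_nonneg (Finset.subset_univ _)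
          intro i _ _
          positivity
        have h4 : ∑ i, (x i : ℝ) = (m:ℝ) := by exact_mod_cast congrArg Nat.cast hx
        linarith
      have hHin : (Hi.card : ℝ) ≤ n/4 := by
        rw [hqm] at hHi4
        have h4q : (0:ℝ) < 4*q := by linarith
        nlinarith
      have : (Lq.card : ℝ) + (Hi.card : ℝ) = n := by exact_mod_cast hcards
      linarith
    have hN : (Lq.card : ℝ) - (Zs.card : ℝ) ≤ (Lo.card : ℝ) := by
      have h1 : (Lq \ Zs).card ≤ Lo.card := Finset.card_le_card hsub
      have h2 : Lq.card - Zs.card ≤ (Lq \ Zs).card := Finset.le_card_sdiff Zs Lq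
      have : Lq.card - Zs.card ≤ Lo.card := le_trans h2 h1
      rcases le_or_gt Lq.card Zs.card with hc | hc
      · have : (Lq.card:ℝ) ≤ (Zs.card:ℝ) := by exact_mod_cast hc
        have h0 : (0:ℝ) ≤ (Lo.card : ℝ) := Nat.cast_nonneg _
        linarith
      · have hcast : ((Lq.card - Zs.card : ℕ) : ℝ) = (Lq.card:ℝ) - Zs.card := by
          push_cast [Nat.cast_sub (le_of_lt hc)]
          ring
        have : ((Lq.card - Zs.card : ℕ):ℝ) ≤ (Lo.card : ℝ) := by exact_mod_cast this
        linarith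
    rw [hZcard] at hN
    linarith
  -- final combination
  rw [hsplit]
  have hΔ : (0.95 - 9*q*fr/n) - (-(2*L*fr/n)) = 0.95 + 7*q*fr/n := by
    rw [hLdef]; ring
  have hAB : (0:ℝ) ≤ (0.95 - 9*q*fr/n) - (-(2*L*fr/n)) := by
    rw [hΔ]; positivity
  set w : ℝ := fr / n with hwdef
  have hw0 : 0 ≤ w := by positivity
  have hw1 : w ≤ 1 := by rw [hwdef, div_le_one hn0]; exact hfrn
  have hfrw : fr = w * n := by rw [hwdef]; field_simp
  have h2L : (n:ℝ)*(-(2*L*fr/n)) = -(16*q*w*n) := by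
    rw [hLdef, hfrw]; field_simp; ring
  have h9 : 9*q*fr/n = 9*q*w := by rw [hfrw]; field_simp
  have h7 : 7*q*fr/n = 7*q*w := by rw [hfrw]; field_simp
  calc psi L x + 3/8 * (n:ℝ) - 28*q*fr
      ≤ psi L x + (n:ℝ)*(-(2*L*fr/n))
        + ((3/4:ℝ)*n - fr) * ((0.95 - 9*q*fr/n) - (-(2*L*fr/n))) := by
        rw [hΔ, h2L, h7, hfrw]
        have hkey : 0 ≤ q*w*(1-w)*n := by
          apply mul_nonneg _ (le_of_lt hn0)
          apply mul_nonneg (mul_nonneg (by linarith) hw0)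
          linarith
        have hkey2 : 0 ≤ w*(q-1)*n := by
          apply mul_nonneg _ (le_of_lt hn0)
          apply mul_nonneg hw0
          linarith
        nlinarith [hn0]
    _ ≤ psi L x + (n:ℝ)*(-(2*L*fr/n))
        + (Lo.card : ℝ) * ((0.95 - 9*q*fr/n) - (-(2*L*fr/n))) := by
        have hprod : 0 ≤ ((Lo.card : ℝ) - ((3/4:ℝ)*n - fr))
            * ((0.95 - 9*q*fr/n) - (-(2*L*fr/n))) := by
          apply mul_nonneg _ hAB
          linarith
        nlinarith [hprod]
    _ = psi L x + ∑ i, (if i ∈ Lo then 0.95 - 9*q*fr/n else -(2*L*fr/n)) := by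
        rw [hsum_ite]; ring
    _ ≤ ∑ i, P i := hsum_all

end Drift
section Bdd

variable {n : ℕ}

lemma Bc_update_eq (x : Fin n → ℕ) (z : Fin n → Fin n) (j : Fin n) (b : Fin n)
    (i : Fin n) (hzj : i ≠ z j) (hb : i ≠ b) :
    Bc x i (Function.update z j b) = Bc x i z := by
  unfold Bc
  congr 1
  apply Finset.filter_congr
  intro j' _
  by_cases h : j' = j
  · subst h
    simp only [Function.update_self]
    constructor
    · rintro ⟨h1, h2⟩; exact absurd h2.symm hb
    · rintro ⟨h1, h2⟩; exact absurd h2.symm hzj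
  · rw [Function.update_of_ne h]

lemma Bc_update_le (x : Fin n → ℕ) (z z' : Fin n → Fin n) (j : Fin n)
    (hzz : ∀ j' ≠ j, z j' = z' j') (i : Fin n) :
    Bc x i z' ≤ Bc x i z + 1 := by
  unfold Bc
  have hsub : (Finset.univ.filter fun j' : Fin n => (j':ℕ) < kappa x ∧ z' j' = i)
      ⊆ insert j (Finset.univ.filter fun j' : Fin n => (j':ℕ) < kappa x ∧ z j' = i) := by
    intro a ha
    rw [Finset.mem_filter] at ha
    by_cases h : a = j
    · rw [h]; exact Finset.mem_insert_self _ _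
    · apply Finset.mem_insert_of_mem
      rw [Finset.mem_filter]
      exact ⟨Finset.mem_univ _, ha.2.1, by rw [hzz a h]; exact ha.2.2⟩
  calc (Finset.univ.filter fun j' : Fin n => (j':ℕ) < kappa x ∧ z' j' = i).card
      ≤ (insert j (Finset.univ.filter fun j' : Fin n => (j':ℕ) < kappa x ∧ z j' = i)).card :=
        Finset.card_le_card hsub
    _ ≤ _ + 1 := Finset.card_insert_le _ _

lemma psi_step_bdd {L : ℝ} (hL0 : 0 ≤ L) (x : Fin n → ℕ) (z : Fin n → Fin n)
    (j : Fin n) (b : Fin n) :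
    |psi L (rbbStep x (Function.update z j b)) - psi L (rbbStep x z)| ≤ 4 * L := by
  classical
  set z' := Function.update z j b with hz'
  have hzz : ∀ j' ≠ j, z j' = z' j' := by
    intro j' h; rw [hz', Function.update_of_ne h]
  have hzz' : ∀ j' ≠ j, z' j' = z j' := fun j' h => (hzz j' h).symm
  have htri : ∀ i, rbbStep x z' i = rbbStep x z i ∨ rbbStep x z' i = rbbStep x z i + 1
      ∨ rbbStep x z i = rbbStep x z' i + 1 := by
    intro i
    have h1 : Bc x i z' ≤ Bc x i z + 1 := Bc_update_le x z z' j hzz i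
    have h2 : Bc x i z ≤ Bc x i z' + 1 := Bc_update_le x z' z j hzz' i
    unfold rbbStep
    have hB : (Finset.univ.filter fun j' : Fin n => (j':ℕ) < kappa x ∧ z j' = i).card
        = Bc x i z := rfl
    have hB' : (Finset.univ.filter fun j' : Fin n => (j':ℕ) < kappa x ∧ z' j' = i).card
        = Bc x i z' := rfl
    rw [hB, hB']
    omega
  have hper : ∀ i, |gfun L ((rbbStep x z' i : ℕ):ℝ) - gfun L ((rbbStep x z i : ℕ):ℝ)| ≤ 2*L := by
    intro i
    rcases htri i with h | h | h
    · rw [h]; simp; positivity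
    · rw [h]
      push_cast
      rw [abs_le]
      have h1 := gfun_step_le hL0 (by positivity : (0:ℝ) ≤ ((rbbStep x z i : ℕ):ℝ))
      have h2 := gfun_step_nonneg hL0 (by positivity : (0:ℝ) ≤ ((rbbStep x z i : ℕ):ℝ))
      constructor <;> linarith
    · rw [h]
      push_cast
      rw [abs_le]
      have h1 := gfun_step_le hL0 (by positivity : (0:ℝ) ≤ ((rbbStep x z' i : ℕ):ℝ))
      have h2 := gfun_step_nonneg hL0 (by positivity : (0:ℝ) ≤ ((rbbStep x z' i : ℕ):ℝ))
      constructor <;> linarith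
  have hzero : ∀ i, i ∉ ({z j, b} : Finset (Fin n)) →
      gfun L ((rbbStep x z' i : ℕ):ℝ) - gfun L ((rbbStep x z i : ℕ):ℝ) = 0 := by
    intro i hi
    simp only [Finset.mem_insert, Finset.mem_singleton] at hi
    push_neg at hi
    have : rbbStep x z' i = rbbStep x z i := by
      unfold rbbStep
      congr 1
      show Bc x i z' = Bc x i z
      exact Bc_update_eq x z j b i hi.1 hi.2
    rw [this]
    ring
  have hsum : psi L (rbbStep x z') - psi L (rbbStep x z)
      = ∑ i ∈ ({z j, b} : Finset (Fin n)),
          (gfun L ((rbbStep x z' i : ℕ):ℝ) - gfun L ((rbbStep x z i : ℕ):ℝ)) := by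
    unfold psi
    rw [← Finset.sum_sub_distrib]
    exact (Finset.sum_subset (Finset.subset_univ _) (fun i _ hi => hzero i hi)).symm
  rw [hsum]
  calc |∑ i ∈ ({z j, b} : Finset (Fin n)),
          (gfun L ((rbbStep x z' i : ℕ):ℝ) - gfun L ((rbbStep x z i : ℕ):ℝ))|
      ≤ ∑ i ∈ ({z j, b} : Finset (Fin n)),
          |gfun L ((rbbStep x z' i : ℕ):ℝ) - gfun L ((rbbStep x z i : ℕ):ℝ)| :=
        Finset.abs_sum_le_sum_abs _ _
    _ ≤ ∑ _i ∈ ({z j, b} : Finset (Fin n)), 2*L := Finset.sum_le_sum (fun i _ => hper i)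
    _ = (({z j, b} : Finset (Fin n)).card : ℝ) * (2*L) := by
        rw [Finset.sum_const, nsmul_eq_mul]
    _ ≤ 2 * (2*L) := by
        have hc : ({z j, b} : Finset (Fin n)).card ≤ 2 := by
          calc ({z j, b} : Finset (Fin n)).card ≤ ({b} : Finset (Fin n)).card + 1 :=
                Finset.card_insert_le _ _
            _ = 2 := by simp
        have hcr : ((({z j, b} : Finset (Fin n)).card : ℕ) : ℝ) ≤ 2 := by exact_mod_cast hc
        have h2L : (0:ℝ) ≤ 2*L := by linarith
        nlinarith
    _ = 4*L := by ring

end Bdd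
section Mart

variable {n : ℕ}

noncomputable def driftE (L : ℝ) (y : Fin n → ℕ) : ℝ :=
  fexp (fun z : Fin n → Fin n => psi L (rbbStep y z)) - psi L y

noncomputable def marts (L : ℝ) (y : Fin n → ℕ) (Zf : ℕ → Fin n → Fin n) (T : ℕ) : ℝ :=
  psi L (rbb y Zf T) - psi L y - ∑ t ∈ Finset.range T, driftE L (rbb y Zf t)

lemma marts_succ (L : ℝ) (y : Fin n → ℕ) (Zf : ℕ → Fin n → Fin n) (T : ℕ) :
    marts L y Zf (T+1)
      = (psi L (rbbStep y (Zf 0)) - fexp (fun z : Fin n → Fin n => psi L (rbbStep y z)))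
        + marts L (rbbStep y (Zf 0)) (fun u => Zf (u+1)) (T) := by
  unfold marts driftE
  rw [Finset.sum_range_succ']
  have hsh : ∀ t, rbb y Zf (t+1) = rbb (rbbStep y (Zf 0)) (fun u => Zf (u+1)) t :=
    fun t => rbb_shift y Zf t
  simp_rw [hsh]
  have h0 : rbb y Zf 0 = y := rfl
  have h0' : rbb (rbbStep y (Zf 0)) (fun u => Zf (u+1)) 0 = rbbStep y (Zf 0) := rfl
  rw [h0]
  ring

lemma marts_congr (L : ℝ) (y : Fin n → ℕ) (Z1 Z2 : ℕ → Fin n → Fin n) (T : ℕ)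
    (h : ∀ u < T, Z1 u = Z2 u) : marts L y Z1 T = marts L y Z2 T := by
  unfold marts
  rw [rbb_congr y Z1 Z2 T h]
  congr 1
  apply Finset.sum_congr rfl
  intro t ht
  rw [Finset.mem_range] at ht
  rw [rbb_congr y Z1 Z2 t (fun u hu => h u (by omega))]

/-- extend a finite tuple of ball choices to an infinite one -/
def extT (T : ℕ) (w : Fin T → (Fin n → Fin n)) : ℕ → (Fin n → Fin n) :=
  fun u => if h : u < T then w ⟨u, h⟩ else id

set_option maxHeartbeats 800000 in
theorem mgf_marts (hnn : 0 < n) {L : ℝ} (hL0 : 0 ≤ L) (s : ℝ) :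
    ∀ (T : ℕ) (y : Fin n → ℕ),
    fexp (fun w : Fin T → (Fin n → Fin n) =>
        Real.exp (s * (- marts L y (extT T w) T)))
      ≤ Real.exp (s^2 * (4*L)^2 * n * T) := by
  haveI : Nonempty (Fin n) := ⟨⟨0, hnn⟩⟩
  haveI : Nonempty (Fin n → Fin n) := ⟨fun _ => ⟨0, hnn⟩⟩
  intro T
  induction T with
  | zero =>
      intro y
      have hm0 : ∀ w : Fin 0 → (Fin n → Fin n), marts L y (extT 0 w) 0 = 0 := by
        intro w
        unfold marts
        simp [rbb]
      calc fexp (fun w : Fin 0 → (Fin n → Fin n) => Real.exp (s * (- marts L y (extT 0 w) 0)))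
          = fexp (fun _ : Fin 0 → (Fin n → Fin n) => (1:ℝ)) := by
            congr 1; funext w; rw [hm0 w]; simp
        _ = 1 := fexp_const 1
        _ ≤ Real.exp (s^2 * (4*L)^2 * n * ((0:ℕ):ℝ)) := by norm_num
  | succ T IH =>
      intro y
      set F : (Fin n → Fin n) → ℝ := fun z => psi L (rbbStep y z) with hF
      have hkey : ∀ (a : Fin n → Fin n) (w' : Fin T → (Fin n → Fin n)),
          marts L y (extT (T+1) (Fin.cons a w')) (T+1)
            = (F a - fexp F) + marts L (rbbStep y a) (extT T w') T := by
        intro a w'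
        have h0 : extT (T+1) (Fin.cons a w') 0 = a := by
          unfold extT
          rw [dif_pos (by omega : 0 < T+1)]
          rfl
        rw [marts_succ, h0]
        congr 1
        apply marts_congr
        intro u hu
        unfold extT
        rw [dif_pos (by omega : u + 1 < T + 1), dif_pos hu]
        rfl
      calc fexp (fun w : Fin (T+1) → (Fin n → Fin n) =>
              Real.exp (s * (- marts L y (extT (T+1) w) (T+1))))
          = fexp (fun a : Fin n → Fin n => fexp (fun w' : Fin T → (Fin n → Fin n) =>
              Real.exp (s * (- marts L y (extT (T+1) (Fin.cons a w')) (T+1))))) :=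
            fexp_piSucc _
        _ = fexp (fun a : Fin n → Fin n =>
              Real.exp (s * (fexp F - F a)) * fexp (fun w' : Fin T → (Fin n → Fin n) =>
                Real.exp (s * (- marts L (rbbStep y a) (extT T w') T)))) := by
            congr 1; funext a
            rw [← fexp_smul]
            congr 1; funext w'
            rw [hkey a w', ← Real.exp_add]
            congr 1; ring
        _ ≤ fexp (fun a : Fin n → Fin n =>
              Real.exp (s * (fexp F - F a)) * Real.exp (s^2 * (4*L)^2 * n * T)) := by
            apply fexp_mono
            intro a
            exact mul_le_mul_of_nonneg_left (IH (rbbStep y a)) (Real.exp_nonneg _)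
        _ = Real.exp (s^2 * (4*L)^2 * n * T)
              * fexp (fun a => Real.exp (s * (fexp F - F a))) := by
            rw [← fexp_smul]; congr 1; funext a; ring
        _ ≤ Real.exp (s^2 * (4*L)^2 * n * T) * Real.exp (s^2 * (4*L)^2 * n) := by
            have hbd : ∀ (z : Fin n → Fin n) (j : Fin n) (b : Fin n),
                |F (Function.update z j b) - F z| ≤ 4*L :=
              fun z j b => psi_step_bdd hL0 y z j b
            have hmc := mcdiarmid_mgf (A := Fin n) n F (4*L) s hbd
            exact mul_le_mul_of_nonneg_left hmc (Real.exp_nonneg _)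
        _ = Real.exp (s^2 * (4*L)^2 * n * (T+1:ℕ)) := by
            rw [← Real.exp_add]; congr 1; push_cast; ring

end Mart
section Counting

lemma psi_nonneg {n : ℕ} {L : ℝ} (hL0 : 0 ≤ L) (x : Fin n → ℕ) : 0 ≤ psi L x := by
  unfold psi
  apply Finset.sum_nonneg
  intro i _
  exact gfun_nonneg hL0 (by positivity)

lemma psi_le_linear {n : ℕ} {L : ℝ} (hL0 : 0 ≤ L) (x : Fin n → ℕ) :
    psi L x ≤ 2*L*(∑ i, (x i : ℝ)) := by
  unfold psi
  rw [Finset.mul_sum]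
  exact Finset.sum_le_sum fun i _ => gfun_le_linear hL0 (by positivity)

set_option maxHeartbeats 1600000 in
theorem counting_main {n m : ℕ} (hn : 1000 ≤ n) (hm : n ≤ m) (y0 : Fin n → ℕ)
    (hy0 : ∑ i, y0 i = m) (T : ℕ) (hT : T = ⌈(744:ℝ) * ((m:ℝ)/n)^2⌉₊) :
    fexp (fun w : Fin T → (Fin n → Fin n) =>
      if (∑ u ∈ Finset.range (T+1), ((n:ℝ) - kappa (rbb y0 (extT T w) u))) < (m:ℝ)/384
      then (1:ℝ) else 0)
      ≤ Real.exp (-(n:ℝ)/60) := by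
  classical
  have hnn : 0 < n := by omega
  haveI : Nonempty (Fin n) := ⟨⟨0, hnn⟩⟩
  haveI : Nonempty (Fin n → Fin n) := ⟨fun _ => ⟨0, hnn⟩⟩
  have hn0 : (0:ℝ) < n := by exact_mod_cast hnn
  set q : ℝ := (m:ℝ)/n with hqdef
  set L : ℝ := 8 * q with hLdef
  have hq1 : 1 ≤ q := by
    rw [hqdef, le_div_iff₀ hn0, one_mul]
    exact_mod_cast hm
  have hq0 : 0 < q := by linarith
  have hL0 : (0:ℝ) ≤ L := by rw [hLdef]; linarith
  have hqm : (m:ℝ) = q * n := by rw [hqdef]; field_simp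
  have hT744 : (744:ℝ) * q^2 ≤ (T:ℝ) := by
    rw [hT]
    exact Nat.le_ceil _
  have hT745 : (T:ℝ) ≤ 745 * q^2 := by
    have h1 : (T:ℝ) < 744*q^2 + 1 := by
      rw [hT]
      exact Nat.ceil_lt_add_one (by positivity)
    nlinarith
  set s : ℝ := 1/(10000*q^2) with hsdef
  have hs0 : 0 < s := by rw [hsdef]; positivity
  -- pathwise bound on the martingale on the bad event
  have hpath : ∀ w : Fin T → (Fin n → Fin n),
      (∑ u ∈ Finset.range (T+1), ((n:ℝ) - kappa (rbb y0 (extT T w) u))) < (m:ℝ)/384 →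
      262*q^2*(n:ℝ) ≤ - marts L y0 (extT T w) T := by
    intro w hbad
    set Zf := extT T w with hZf
    have hdrift : ∀ t, (3/8:ℝ)*n - 28*q*((n:ℝ) - kappa (rbb y0 Zf t))
        ≤ driftE L (rbb y0 Zf t) := by
      intro t
      have hsum : ∑ i, rbb y0 Zf t i = m := by rw [rbb_sum]; exact hy0
      have := drift_lemma hn hm (rbb y0 Zf t) hsum
      unfold driftE
      rw [← hqdef, ← hLdef] at this
      linarith
    have hfN0 : ∀ t, (0:ℝ) ≤ (n:ℝ) - kappa (rbb y0 Zf t) := by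
      intro t
      have := kappa_le (rbb y0 Zf t)
      have : (kappa (rbb y0 Zf t) : ℝ) ≤ n := by exact_mod_cast this
      linarith
    have hSb : ∑ t ∈ Finset.range T, ((n:ℝ) - kappa (rbb y0 Zf t)) < (m:ℝ)/384 := by
      have h1 : ∑ t ∈ Finset.range (T+1), ((n:ℝ) - kappa (rbb y0 Zf t))
          = ∑ t ∈ Finset.range T, ((n:ℝ) - kappa (rbb y0 Zf t))
            + ((n:ℝ) - kappa (rbb y0 Zf T)) := Finset.sum_range_succ _ _
      have h2 := hfN0 T
      rw [hZf] at *
      linarith [hbad, h1, h2]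
    have hSdrift : (3/8:ℝ)*n*T - 28*q*((m:ℝ)/384)
        ≤ ∑ t ∈ Finset.range T, driftE L (rbb y0 Zf t) := by
      have h1 : ∑ t ∈ Finset.range T, ((3/8:ℝ)*n - 28*q*((n:ℝ) - kappa (rbb y0 Zf t)))
          ≤ ∑ t ∈ Finset.range T, driftE L (rbb y0 Zf t) :=
        Finset.sum_le_sum fun t _ => hdrift t
      have h2 : ∑ t ∈ Finset.range T, ((3/8:ℝ)*n - 28*q*((n:ℝ) - kappa (rbb y0 Zf t)))
          = (3/8:ℝ)*n*T - 28*q*(∑ t ∈ Finset.range T, ((n:ℝ) - kappa (rbb y0 Zf t))) := by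
        rw [Finset.sum_sub_distrib, Finset.sum_const, Finset.card_range, ← Finset.mul_sum,
          nsmul_eq_mul]
        ring
      rw [h2] at h1
      have h3 : 28*q*(∑ t ∈ Finset.range T, ((n:ℝ) - kappa (rbb y0 Zf t)))
          ≤ 28*q*((m:ℝ)/384) := by
        apply mul_le_mul_of_nonneg_left (le_of_lt hSb) (by linarith)
      linarith
    have hpsT : psi L (rbb y0 Zf T) ≤ 16*q^2*n := by
      have h1 := psi_le_linear hL0 (rbb y0 Zf T)
      have h2 : ∑ i, ((rbb y0 Zf T i : ℕ):ℝ) = (m:ℝ) := by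
        have := rbb_sum y0 Zf T
        rw [hy0] at this
        exact_mod_cast congrArg Nat.cast this
      rw [h2] at h1
      rw [hLdef] at h1 ⊢
      nlinarith [h1, hqm]
    have hps0 : 0 ≤ psi L y0 := psi_nonneg hL0 y0
    unfold marts
    have hq2 : (1:ℝ) ≤ q^2 := by nlinarith
    have hmq : 28*q*((m:ℝ)/384) = 28*q^2*n/384 := by rw [hqm]; ring
    rw [hmq] at hSdrift
    have hTn : (3/8:ℝ)*n*T ≥ (3/8)*n*(744*q^2) := by nlinarith
    nlinarith [hSdrift, hpsT, hps0, hTn, hn0]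
  -- Chernoff, pointwise
  have hpoint : ∀ w : Fin T → (Fin n → Fin n),
      (if (∑ u ∈ Finset.range (T+1), ((n:ℝ) - kappa (rbb y0 (extT T w) u))) < (m:ℝ)/384
        then (1:ℝ) else 0)
      ≤ Real.exp (-(s*(262*q^2*n))) * Real.exp (s * (- marts L y0 (extT T w) T)) := by
    intro w
    rw [← Real.exp_add]
    split
    · rename_i hbad
      have h1 := hpath w hbad
      have h2 : 0 ≤ -(s*(262*q^2*n)) + s * (- marts L y0 (extT T w) T) := by
        have := mul_le_mul_of_nonneg_left h1 (le_of_lt hs0)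
        nlinarith
      calc (1:ℝ) = Real.exp 0 := Real.exp_zero.symm
        _ ≤ _ := Real.exp_le_exp.2 h2
    · positivity
  calc fexp (fun w : Fin T → (Fin n → Fin n) =>
        if (∑ u ∈ Finset.range (T+1), ((n:ℝ) - kappa (rbb y0 (extT T w) u))) < (m:ℝ)/384
        then (1:ℝ) else 0)
      ≤ fexp (fun w : Fin T → (Fin n → Fin n) =>
          Real.exp (-(s*(262*q^2*n))) * Real.exp (s * (- marts L y0 (extT T w) T))) :=
        fexp_mono hpoint
    _ = Real.exp (-(s*(262*q^2*n)))
        * fexp (fun w : Fin T → (Fin n → Fin n) =>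
            Real.exp (s * (- marts L y0 (extT T w) T))) := fexp_smul _ _
    _ ≤ Real.exp (-(s*(262*q^2*n))) * Real.exp (s^2 * (4*L)^2 * n * T) := by
        apply mul_le_mul_of_nonneg_left _ (Real.exp_nonneg _)
        exact mgf_marts hnn hL0 s T y0
    _ = Real.exp (s^2 * (4*L)^2 * n * T - s*(262*q^2*n)) := by
        rw [← Real.exp_add]; congr 1; ring
    _ ≤ Real.exp (-(n:ℝ)/60) := by
        apply Real.exp_le_exp.2
        have hE1 : s^2 * (4*L)^2 * (n:ℝ) * (T:ℝ) ≤ (1024*745/100000000)*n := by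
          have hs2 : s^2 * (4*L)^2 = 1024/(100000000*q^2) := by
            rw [hsdef, hLdef]
            field_simp
            ring
          rw [hs2]
          have h1 : 1024/(100000000*q^2) * (n:ℝ) * (T:ℝ)
              ≤ 1024/(100000000*q^2) * (n:ℝ) * (745*q^2) := by
            apply mul_le_mul_of_nonneg_left hT745 (by positivity)
          have h2 : 1024/(100000000*q^2) * (n:ℝ) * (745*q^2) = (1024*745/100000000)*n := by
            field_simp
          linarith
        have hE2 : s*(262*q^2*(n:ℝ)) = 262*n/10000 := by
          rw [hsdef]
          field_simp
        rw [hE2]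
        have : (1024*745/100000000:ℝ)*n - 262*n/10000 ≤ -(n:ℝ)/60 := by
          nlinarith [hn0]
        linarith

end Counting
set_option maxHeartbeats 1600000 in
/-- **Lemma 4.3 (many empty bins).** For the RBB process with `m ≥ n` balls, started at
round `t₀` from an arbitrary configuration, with `t₃ := t₀ + ⌈744·(m/n)²⌉`, there are
constants `c > 0` and `n₀` such that for all `n ≥ n₀`, with probability at least
`1 - e^{-c·n}` the total number of empty bin/round pairs in `[t₀, t₃]` is at least
`m/384`. -/
theorem rbb_many_empty_bins :
    ∃ c : ℝ, 0 < c ∧ ∃ n0 : ℕ, ∀ n : ℕ, n0 ≤ n → ∀ m : ℕ, n ≤ m →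
    ∀ (Ω : Type) [inst : MeasurableSpace Ω] (P : Measure Ω) [IsProbabilityMeasure P]
      (Z : ℕ → Fin n → Ω → Fin n),
      (∀ t j, Measurable (Z t j)) →
      iIndepFun (fun (p : ℕ × Fin n) ω => Z p.1 p.2 ω) P →
      (∀ t j i, P {ω | Z t j ω = i} = (n : ℝ≥0∞)⁻¹) →
    ∀ t0 : ℕ, ∀ x0 : Fin n → ℕ, (∑ i, x0 i) = m →
      (let t3 : ℕ := t0 + ⌈(744 : ℝ) * ((m : ℝ) / n) ^ 2⌉₊
       P {ω | ((m : ℝ) / 384) ≤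
            ((∑ t ∈ Finset.Icc t0 t3,
                (n - kappa (rbb x0 (fun u j => Z (t0 + u) j ω) (t - t0)))) : ℝ)}
         ≥ ENNReal.ofReal (1 - Real.exp (-c * n))) := by
  classical
  refine ⟨1/60, by norm_num, 1000, ?_⟩
  intro n hn m hm Ω inst P hPprob Z hZmeas hZindep hZunif t0 x0 hx0
  intro t3
  have hnn : 0 < n := by omega
  have hn0 : (0:ℝ) < n := by exact_mod_cast hnn
  haveI : Nonempty (Fin n) := ⟨⟨0, hnn⟩⟩
  haveI : Nonempty (Fin n → Fin n) := ⟨fun _ => ⟨0, hnn⟩⟩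
  set T : ℕ := ⌈(744 : ℝ) * ((m : ℝ) / n) ^ 2⌉₊ with hTdef
  haveI : Nonempty (Fin T → Fin n → Fin n) := ⟨fun _ _ => ⟨0, hnn⟩⟩
  have ht3 : t3 = t0 + T := rfl
  -- the tuple map
  set τ : Ω → (Fin T → (Fin n → Fin n)) :=
    fun ω => fun u => fun j => Z (t0 + (u : ℕ)) j ω with hτdef
  set val' : (Fin T → (Fin n → Fin n)) → ℝ :=
    fun w => ∑ u ∈ Finset.range (T+1), ((n:ℝ) - kappa (rbb x0 (extT T w) u)) with hvaldef
  -- the observed sum only depends on the tuple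
  have hval : ∀ ω : Ω,
      (∑ t ∈ Finset.Icc t0 t3,
        ((n:ℝ) - (kappa (rbb x0 (fun u j => Z (t0 + u) j ω) (t - t0)) : ℝ)))
      = val' (τ ω) := by
    intro ω
    rw [ht3]
    have hIcc : Finset.Icc t0 (t0+T) = (Finset.range (T+1)).image (fun u => t0 + u) := by
      ext a
      simp only [Finset.mem_Icc, Finset.mem_image, Finset.mem_range]
      constructor
      · intro h; exact ⟨a - t0, by omega, by omega⟩
      · rintro ⟨u, hu, rfl⟩; omega
    rw [hIcc, Finset.sum_image (by intro a _ b _ h; simp only at h; omega)]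
    apply Finset.sum_congr rfl
    intro u hu
    rw [Finset.mem_range] at hu
    have hsub : t0 + u - t0 = u := by omega
    rw [hsub]
    have hrbb : rbb x0 (fun u j => Z (t0 + u) j ω) u = rbb x0 (extT T (τ ω)) u := by
      apply rbb_congr
      intro v hv
      have hvT : v < T := by omega
      show (fun u j => Z (t0 + u) j ω) v = extT T (τ ω) v
      unfold extT
      rw [dif_pos hvT]
    rw [hrbb]
  -- the bad set of tuples
  set badSet : Finset (Fin T → (Fin n → Fin n)) :=
    Finset.univ.filter (fun w => val' w < (m:ℝ)/384) with hbaddef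
  -- the atoms
  have hAtom_meas : ∀ w : Fin T → (Fin n → Fin n), MeasurableSet {ω | τ ω = w} := by
    intro w
    have : {ω | τ ω = w} = ⋂ p ∈ (Finset.univ : Finset (Fin T × Fin n)),
        (fun ω => Z (t0 + (p.1:ℕ)) p.2 ω) ⁻¹' {w p.1 p.2} := by
      ext ω
      simp only [Set.mem_setOf_eq, Set.mem_iInter, Set.mem_preimage, Set.mem_singleton_iff,
        Finset.mem_univ, forall_const]
      constructor
      · intro h p; rw [← h]
      · intro h
        funext u j
        exact h (u, j)
    rw [this]
    apply Finset.measurableSet_biInter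
    intro p _
    exact hZmeas _ _ (measurableSet_singleton _)
  -- atom probabilities
  have hAtomP : ∀ w : Fin T → (Fin n → Fin n),
      P {ω | τ ω = w} = ((n : ℝ≥0∞))⁻¹ ^ (T * n) := by
    intro w
    set ι : (Fin T × Fin n) → ℕ × Fin n := fun p => (t0 + (p.1 : ℕ), p.2) with hιdef
    have hι : Function.Injective ι := by
      rintro ⟨a, b⟩ ⟨a', b'⟩ h
      have h' : (t0 + (a:ℕ), b) = (t0 + (a':ℕ), b') := h
      rw [Prod.mk.injEq] at h'
      obtain ⟨h1, h2⟩ := h'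
      have ha : a = a' := Fin.ext (by omega)
      subst ha
      rw [h2]
    set wsets : ℕ × Fin n → Set (Fin n) :=
      fun r => if h : t0 ≤ r.1 ∧ r.1 - t0 < T then {w ⟨r.1 - t0, h.2⟩ r.2} else Set.univ
      with hwdef
    have hwmeas : ∀ r, MeasurableSet (wsets r) := by
      intro r
      show MeasurableSet (if h : t0 ≤ r.1 ∧ r.1 - t0 < T
        then ({w ⟨r.1 - t0, h.2⟩ r.2} : Set (Fin n)) else Set.univ)
      split
      · exact measurableSet_singleton _
      · exact MeasurableSet.univ
    have hred : ∀ p : Fin T × Fin n, wsets (ι p) = {w p.1 p.2} := by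
      intro p
      have hcond : t0 ≤ t0 + (p.1:ℕ) ∧ t0 + (p.1:ℕ) - t0 < T :=
        ⟨Nat.le_add_right _ _, by have := p.1.2; omega⟩
      show (if h : t0 ≤ t0 + (p.1:ℕ) ∧ t0 + (p.1:ℕ) - t0 < T
        then ({w ⟨t0 + (p.1:ℕ) - t0, h.2⟩ p.2} : Set (Fin n)) else Set.univ) = {w p.1 p.2}
      rw [dif_pos hcond]
      have heq : (⟨t0 + (p.1:ℕ) - t0, hcond.2⟩ : Fin T) = p.1 := by
        apply Fin.ext
        simp
      rw [heq]
    have hAtomEq : {ω | τ ω = w}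
        = ⋂ r ∈ (Finset.univ : Finset (Fin T × Fin n)).image ι,
            (fun ω => Z r.1 r.2 ω) ⁻¹' wsets r := by
      rw [Finset.set_biInter_finset_image]
      ext ω
      simp only [Set.mem_setOf_eq, Set.mem_iInter, Set.mem_preimage, Finset.mem_univ,
        forall_const]
      constructor
      · intro h p
        rw [hred p, ← h]
        exact rfl
      · intro h
        funext u j
        have := h (u, j)
        rw [hred (u, j)] at this
        exact this
    rw [hAtomEq]
    rw [hZindep.measure_inter_preimage_eq_mul ((Finset.univ : Finset (Fin T × Fin n)).image ι)
      (fun r _ => hwmeas r)]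
    rw [Finset.prod_image (fun p _ p' _ h => hι h)]
    have hterm : ∀ p : Fin T × Fin n,
        P ((fun ω => Z (ι p).1 (ι p).2 ω) ⁻¹' wsets (ι p)) = (n : ℝ≥0∞)⁻¹ := by
      intro p
      rw [hred p]
      have : ((fun ω => Z (ι p).1 (ι p).2 ω) ⁻¹' {w p.1 p.2})
          = {ω | Z (ι p).1 (ι p).2 ω = w p.1 p.2} := rfl
      rw [this]
      exact hZunif _ _ _
    rw [Finset.prod_congr rfl (fun p _ => hterm p), Finset.prod_const]
    congr 1
    simp [Finset.card_univ]
  -- the failure event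
  set failSet : Set Ω := ⋃ w ∈ badSet, {ω | τ ω = w} with hfaildef
  have hfail_meas : MeasurableSet failSet :=
    Finset.measurableSet_biUnion _ (fun w _ => hAtom_meas w)
  have hPfail : P failSet = (badSet.card : ℝ≥0∞) * ((n : ℝ≥0∞))⁻¹ ^ (T * n) := by
    rw [hfaildef, measure_biUnion_finset ?hd (fun w _ => hAtom_meas w)]
    · rw [Finset.sum_congr rfl (fun w _ => hAtomP w), Finset.sum_const, nsmul_eq_mul]
    · intro w1 h1 w2 h2 hne
      apply Set.disjoint_left.2
      intro ω hω1 hω2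
      simp only [Set.mem_setOf_eq] at hω1 hω2
      exact hne (hω1 ▸ hω2 ▸ rfl)
  -- bound the bad count via the Chernoff estimate
  have hcount := counting_main hn hm x0 hx0 T hTdef
  have hcardV : (Fintype.card (Fin T → (Fin n → Fin n)) : ℝ) = ((n:ℝ)^n)^T := by
    rw [Fintype.card_fun, Fintype.card_fun]
    simp only [Fintype.card_fin]
    push_cast
    ring
  have hcardV0 : (0:ℝ) < (Fintype.card (Fin T → (Fin n → Fin n)) : ℝ) := by
    exact_mod_cast Fintype.card_pos
  have hbadcard : (badSet.card : ℝ) ≤ Real.exp (-(n:ℝ)/60) * ((n:ℝ)^n)^T := by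
    have hfexp : fexp (fun w : Fin T → (Fin n → Fin n) =>
        if val' w < (m:ℝ)/384 then (1:ℝ) else 0)
        = (badSet.card : ℝ) / (Fintype.card (Fin T → (Fin n → Fin n)) : ℝ) := by
      unfold fexp
      congr 1
      rw [Finset.sum_boole, hbaddef]
    have h2 : (badSet.card : ℝ) / (Fintype.card (Fin T → (Fin n → Fin n)) : ℝ)
        ≤ Real.exp (-(n:ℝ)/60) := by
      rw [← hfexp]
      exact hcount
    rw [div_le_iff₀ hcardV0] at h2
    rw [← hcardV]
    linarith
  have hPfail_le : P failSet ≤ ENNReal.ofReal (Real.exp (-(n:ℝ)/60)) := by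
    rw [hPfail]
    have hr : (badSet.card : ℝ≥0∞) * ((n : ℝ≥0∞))⁻¹ ^ (T * n)
        = ENNReal.ofReal ((badSet.card : ℝ) * ((n:ℝ)⁻¹) ^ (T * n)) := by
      rw [ENNReal.ofReal_mul (by positivity)]
      congr 1
      · rw [ENNReal.ofReal_natCast]
      · rw [ENNReal.ofReal_pow (by positivity)]
        congr 1
        rw [ENNReal.ofReal_inv_of_pos hn0, ENNReal.ofReal_natCast]
    rw [hr]
    apply ENNReal.ofReal_le_ofReal
    have hpows : ((n:ℝ)^n)^T = (n:ℝ)^(T*n) := by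
      rw [← pow_mul, Nat.mul_comm]
    have hbc : (badSet.card : ℝ) ≤ Real.exp (-(n:ℝ)/60) * (n:ℝ)^(T*n) := by
      rw [← hpows]; exact hbadcard
    have hp0 : (0:ℝ) < (n:ℝ)^(T*n) := by positivity
    rw [inv_pow, ← div_eq_mul_inv, div_le_iff₀ hp0]
    exact hbc
  -- the good event is the complement
  have hEv : {ω | ((m : ℝ) / 384) ≤
      ((∑ t ∈ Finset.Icc t0 t3,
        ((n:ℝ) - (kappa (rbb x0 (fun u j => Z (t0 + u) j ω) (t - t0)) : ℝ))))}
      = failSetᶜ := by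
    ext ω
    simp only [Set.mem_setOf_eq, Set.mem_compl_iff, hfaildef, Set.mem_iUnion]
    rw [hval ω]
    constructor
    · intro h hmem
      obtain ⟨w, hw, hτ⟩ := hmem
      rw [hbaddef, Finset.mem_filter] at hw
      rw [← hτ] at hw
      linarith [hw.2]
    · intro h
      by_contra hlt
      push_neg at hlt
      exact h ⟨τ ω, by rw [hbaddef, Finset.mem_filter]; exact ⟨Finset.mem_univ _, hlt⟩, rfl⟩
  have hcompl : P failSetᶜ = 1 - P failSet := prob_compl_eq_one_sub hfail_meas
  have hgoal : P {ω | ((m : ℝ) / 384) ≤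
      ((∑ t ∈ Finset.Icc t0 t3,
        ((n:ℝ) - (kappa (rbb x0 (fun u j => Z (t0 + u) j ω) (t - t0)) : ℝ))))}
      = 1 - P failSet := by
    rw [hEv, hcompl]
  rw [ge_iff_le]
  calc ENNReal.ofReal (1 - Real.exp (-(1/60) * n))
      = ENNReal.ofReal (1 - Real.exp (-(n:ℝ)/60)) := by
        congr 2
        ring
    _ = 1 - ENNReal.ofReal (Real.exp (-(n:ℝ)/60)) := by
        rw [ENNReal.ofReal_sub _ (Real.exp_nonneg _), ENNReal.ofReal_one]
    _ ≤ 1 - P failSet := by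
        exact tsub_le_tsub_left hPfail_le 1
    _ = P {ω | ((m : ℝ) / 384) ≤
        ((∑ t ∈ Finset.Icc t0 t3,
          ((n:ℝ) - (kappa (rbb x0 (fun u j => Z (t0 + u) j ω) (t - t0)) : ℝ))))} := hgoal.symm
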